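/- Let L be a free ℤ-module with symplectic basis α₁,…,α_g,β₁,…,β_g and alternating form ω, and let J_k = α_k + Σ_m b_{km} β_m with B symmetric. Then there exists a composition h of transvections along vectors of the form β_i + β_j (i ≠ j) and along β_i, such that h(J_k) = α_k for all k. -/

import Mathlib

/-- Transvection along `τ` with multiplicity `n`. -/
noncomputable def tvMap {L : Type*} [AddCommGroup L] [Module ℤ L]
    (ω : L →ₗ[ℤ] L →ₗ[ℤ] ℤ) (τ : L) (n : ℤ) : L →ₗ[ℤ] L :=
  LinearMap.id + LinearMap.toSpanSingleton ℤ L τ ∘ₗ (n • ω.flip τ)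

theorem tvMap_apply {L : Type*} [AddCommGroup L] [Module ℤ L]
    (ω : L →ₗ[ℤ] L →ₗ[ℤ] ℤ) (τ : L) (n : ℤ) (γ : L) :
    tvMap ω τ n γ = γ + (n * ω γ τ) • τ := by
  simp only [tvMap, LinearMap.add_apply, LinearMap.id_apply, LinearMap.comp_apply,
    LinearMap.smul_apply, LinearMap.flip_apply, LinearMap.toSpanSingleton_apply,
    smul_eq_mul, ← Int.cast_smul_eq_zsmul ℤ, Int.cast_id]



/-- With a symplectic basis `α₁,…,α_g, β₁,…,β_g`, symmetric `B`, and
`J k = α k + ∑ m, B k m • β m`, there is a composition `h` of transvections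
along vectors of the form `β i + β j` (`i ≠ j`) and along `β i` (each applied
an arbitrary integer number of times) with `h (J k) = α k` for all `k`. -/
theorem untwist_by_transvections
    (L : Type*) [AddCommGroup L] [Module ℤ L]
    (g : ℕ) (b : Module.Basis (Fin g ⊕ Fin g) ℤ L)
    (ω : L →ₗ[ℤ] L →ₗ[ℤ] ℤ) (halt : ∀ x, ω x x = 0)
    (α β : Fin g → L)
    (hα : ∀ i, α i = b (Sum.inl i)) (hβ : ∀ j, β j = b (Sum.inr j))
    (hαβ : ∀ i j, ω (α i) (β j) = if i = j then 1 else 0)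
    (hβα : ∀ i j, ω (β i) (α j) = if i = j then -1 else 0)
    (hαα : ∀ i j, ω (α i) (α j) = 0)
    (hββ : ∀ i j, ω (β i) (β j) = 0)
    (B : Matrix (Fin g) (Fin g) ℤ) (hBsymm : B.IsSymm)
    (J : Fin g → L) (hJ : ∀ k, J k = α k + ∑ m, B k m • β m) :
    ∃ l : List (L →ₗ[ℤ] L),
      (∀ f ∈ l, ∃ τ : L,
        ((∃ i j : Fin g, i ≠ j ∧ τ = β i + β j) ∨ (∃ i : Fin g, τ = β i)) ∧
        ∃ n : ℤ, ∀ γ : L, f γ = γ + (n * ω γ τ) • τ) ∧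
      ∀ k, l.prod (J k) = α k := by
  classical
  set S : Submodule ℤ L := Submodule.span ℤ (Set.range β) with hSdef
  have hβS : ∀ i, β i ∈ S := fun i => Submodule.subset_span ⟨i, rfl⟩
  have hS0 : ∀ x ∈ S, ∀ j, ω (β j) x = 0 := by
    intro x hx j
    have hle : S ≤ LinearMap.ker (ω (β j)) := by
      rw [hSdef, Submodule.span_le]
      rintro _ ⟨i, rfl⟩
      exact hββ j i
    exact hle hx
  have hS2 : ∀ s ∈ S, ∀ x ∈ S, ω s x = 0 := by
    intro s hs x hx
    have hle : S ≤ LinearMap.ker (ω.flip x) := by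
      rw [hSdef, Submodule.span_le]
      rintro _ ⟨i, rfl⟩
      exact hS0 x hx i
    exact hle hs
  -- key composition lemma
  have key : ∀ ps : List (L × ℤ), (∀ p ∈ ps, p.1 ∈ S) → ∀ v : L,
      (ps.map fun p => tvMap ω p.1 p.2).prod v
        = v + (ps.map fun p => (p.2 * ω v p.1) • p.1).sum := by
    intro ps
    induction ps with
    | nil => intro _ v; simp
    | cons p ps ih =>
      intro hmem v
      have hp : p.1 ∈ S := hmem p List.mem_cons_self
      have hps : ∀ q ∈ ps, q.1 ∈ S := fun q hq => hmem q (List.mem_cons_of_mem p hq)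
      have hsum : (ps.map fun q => (q.2 * ω v q.1) • q.1).sum ∈ S := by
        apply list_sum_mem
        intro x hx
        obtain ⟨q, hq, rfl⟩ := List.mem_map.mp hx
        exact zsmul_mem (hps q hq) _
      have hω : ω (v + (ps.map fun q => (q.2 * ω v q.1) • q.1).sum) p.1 = ω v p.1 := by
        rw [map_add, LinearMap.add_apply, hS2 _ hsum _ hp, add_zero]
      simp only [List.map_cons, List.prod_cons, Module.End.mul_apply, ih hps v,
        tvMap_apply, List.sum_cons, hω]
      abel
  -- the explicit list of (direction, multiplicity) pairs
  set P : Finset (Fin g × Fin g) := Finset.univ.filter (fun p => p.1 < p.2) with hP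
  refine ⟨((P.toList.map fun p => (β p.1 + β p.2, -B p.1 p.2))
      ++ ((Finset.univ : Finset (Fin g)).toList.map
            fun i => (β i, (∑ j, B i j) - 2 * B i i))).map
      (fun p => tvMap ω p.1 p.2), ?_, ?_⟩
  · intro f hf
    obtain ⟨p, hp, rfl⟩ := List.mem_map.mp hf
    refine ⟨p.1, ?_, p.2, fun γ => tvMap_apply ω p.1 p.2 γ⟩
    rcases List.mem_append.mp hp with h | h
    · obtain ⟨q, hq, hpe⟩ := List.mem_map.mp h
      have hlt : q.1 < q.2 := by
        have := Finset.mem_toList.mp hq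
        rw [hP, Finset.mem_filter] at this
        exact this.2
      exact Or.inl ⟨q.1, q.2, ne_of_lt hlt, by rw [← hpe]⟩
    · obtain ⟨i, _, hpe⟩ := List.mem_map.mp h
      exact Or.inr ⟨i, by rw [← hpe]⟩
  · intro k
    have hmem : ∀ p ∈ ((P.toList.map fun p => (β p.1 + β p.2, -B p.1 p.2))
        ++ ((Finset.univ : Finset (Fin g)).toList.map
              fun i => (β i, (∑ j, B i j) - 2 * B i i))), p.1 ∈ S := by
      intro p hp
      rcases List.mem_append.mp hp with h | h
      · obtain ⟨q, _, hpe⟩ := List.mem_map.mp h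
        rw [← hpe]; exact S.add_mem (hβS q.1) (hβS q.2)
      · obtain ⟨i, _, hpe⟩ := List.mem_map.mp h
        rw [← hpe]; exact hβS i
    rw [key _ hmem (J k)]
    have hJβ : ∀ m, ω (J k) (β m) = if k = m then 1 else 0 := by
      intro m
      simp [hJ, hαβ, hββ]
    rw [List.map_append, List.sum_append, List.map_map, List.map_map]
    rw [Finset.sum_map_toList, Finset.sum_map_toList]
    set D : Fin g → Fin g → L := fun i j => (-B i j) • (β i + β j) with hD
    have hDsymm : ∀ i j, D i j = D j i := by
      intro i j
      rw [hD]
      simp only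
      rw [hBsymm.apply i j, add_comm]
    -- the second sum
    have hsum2 : (∑ i, (Function.comp (fun p : L × ℤ => (p.2 * ω (J k) p.1) • p.1)
          (fun i => (β i, (∑ j, B i j) - 2 * B i i)) i))
        = ((∑ j, B k j) - 2 * B k k) • β k := by
      have e : ∀ i, (Function.comp (fun p : L × ℤ => (p.2 * ω (J k) p.1) • p.1)
          (fun i => (β i, (∑ j, B i j) - 2 * B i i)) i)
          = if k = i then ((∑ j, B i j) - 2 * B i i) • β i else 0 := by
        intro i
        simp only [Function.comp, hJβ]
        split_ifs <;> simp
      rw [Finset.sum_congr rfl fun i _ => e i, Finset.sum_ite_eq]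
      simp
    -- the first sum
    have hsum1 : (∑ p ∈ P, (Function.comp (fun p : L × ℤ => (p.2 * ω (J k) p.1) • p.1)
          (fun p : Fin g × Fin g => (β p.1 + β p.2, -B p.1 p.2)) p))
        = ∑ j, (if j = k then 0 else D k j) := by
      have e : ∀ p : Fin g × Fin g, (Function.comp (fun p : L × ℤ => (p.2 * ω (J k) p.1) • p.1)
          (fun p : Fin g × Fin g => (β p.1 + β p.2, -B p.1 p.2)) p)
          = (-B p.1 p.2 * ((if k = p.1 then 1 else 0) + (if k = p.2 then (1:ℤ) else 0)))
              • (β p.1 + β p.2) := by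
        intro p
        simp only [Function.comp, map_add, hJβ]
      rw [Finset.sum_congr rfl fun p _ => e p]
      rw [hP, Finset.sum_filter, Fintype.sum_prod_type]
      have epoint : ∀ i j : Fin g,
          (if i < j then (-B i j * ((if k = i then 1 else 0) + (if k = j then (1:ℤ) else 0)))
              • (β i + β j) else 0)
          = (if k = i then (if i < j then D i j else 0) else 0)
            + (if k = j then (if i < j then D i j else 0) else 0) := by
        intro i j
        rcases lt_trichotomy i j with h | h | h
        · by_cases h1 : k = i
          · have h2 : ¬ k = j := by
              rintro rfl
              exact absurd h1.symm (ne_of_lt h)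
            simp [h1, h2, h, hD, (ne_of_lt h)]
          · by_cases h2 : k = j
            · simp [h1, h2, h, hD, (ne_of_lt h), (ne_of_gt h)]
            · simp [h1, h2, h]
        · simp [h, lt_irrefl]
        · have : ¬ i < j := lt_asymm h
          simp [this]
      rw [Finset.sum_congr rfl fun i _ => Finset.sum_congr rfl fun j _ => epoint i j]
      rw [Finset.sum_congr rfl fun i _ => Finset.sum_add_distrib, Finset.sum_add_distrib]
      have c1 : (∑ i, ∑ j, (if k = i then (if i < j then D i j else 0) else 0))
          = ∑ j, (if k < j then D k j else 0) := by
        rw [Finset.sum_comm]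
        refine Finset.sum_congr rfl fun j _ => ?_
        rw [Finset.sum_ite_eq]
        simp
      have c2 : (∑ i, ∑ j, (if k = j then (if i < j then D i j else 0) else 0))
          = ∑ i, (if i < k then D k i else 0) := by
        refine Finset.sum_congr rfl fun i _ => ?_
        rw [Finset.sum_ite_eq]
        simp [hDsymm]
      rw [c1, c2, ← Finset.sum_add_distrib]
      refine Finset.sum_congr rfl fun j _ => ?_
      rcases lt_trichotomy j k with h | h | h
      · simp [h, lt_asymm h, ne_of_lt h]
      · simp [h, lt_irrefl]
      · simp [h, lt_asymm h, (ne_of_gt h)]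
    rw [hsum1, hsum2]
    -- final algebra
    have efin : ∀ j, (if j = k then 0 else D k j)
        = D k j - (if j = k then D k j else 0) := by
      intro j
      split_ifs <;> simp
    rw [Finset.sum_congr rfl fun j _ => efin j, Finset.sum_sub_distrib,
      Finset.sum_ite_eq' Finset.univ k]
    simp only [Finset.mem_univ, if_true]
    have eD : ∀ j, D k j = -(B k j • β k) - B k j • β j := by
      intro j
      show (-B k j) • (β k + β j) = _
      simp only [← Int.cast_smul_eq_zsmul ℤ, Int.cast_id, neg_smul, smul_add]
      abel
    rw [Finset.sum_congr rfl fun j _ => eD j, Finset.sum_sub_distrib, eD k, hJ k]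
    simp only [← Int.cast_smul_eq_zsmul ℤ, Int.cast_id]
    rw [sub_smul, two_mul, add_smul, Finset.sum_neg_distrib, ← Finset.sum_smul]
    abel
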